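/- arXiv:1705.10714 — 2 statements merged into one kernel-verified Lean document; each statement's English description precedes it below -/
import Mathlib

section
/- Let g be a metric on an open set U ⊆ ℝ⁴, let Ω : U → ℝ be smooth and strictly positive, and let φ : U → ℝ be smooth with □_g φ = F. Define the conformally rescaled metric g̃ = Ω⁻² g (so that g̃^{αβ} = Ω² g^{αβ} and |g̃| = Ω⁻⁸ |g|), set ψ = Ω φ and V = Ω³ □_g(Ω⁻¹). Then the identity □_{g̃} ψ + V ψ = Ω³ F holds pointwise on U. -/
noncomputable section

/-- Points of the coordinate chart `ℝ⁴`. -/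
abbrev Pt : Type := Fin 4 → ℝ

/-- Coordinate partial derivative `∂_α f`. -/
def pd (α : Fin 4) (f : Pt → ℝ) (x : Pt) : ℝ :=
  fderiv ℝ f x (Pi.single α (1 : ℝ))

/-- `|g| = |det (g_{αβ})|`. -/
def adet (g : Pt → Matrix (Fin 4) (Fin 4) ℝ) (x : Pt) : ℝ := |(g x).det|

/-- Inverse metric `g^{αβ}`. -/
def ginv (g : Pt → Matrix (Fin 4) (Fin 4) ℝ) (x : Pt) : Matrix (Fin 4) (Fin 4) ℝ := (g x)⁻¹

/-- The wave operator `□_g φ = |g|^{-1/2} ∂_α(|g|^{1/2} g^{αβ} ∂_β φ)`. -/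
def boxg (g : Pt → Matrix (Fin 4) (Fin 4) ℝ) (φ : Pt → ℝ) (x : Pt) : ℝ :=
  (Real.sqrt (adet g x))⁻¹ *
    ∑ α : Fin 4, pd α (fun y => Real.sqrt (adet g y) * ∑ β : Fin 4, ginv g y α β * pd β φ y) x

/-- A smooth symmetric everywhere-nondegenerate metric on `U`. -/
structure IsMetricOn (g : Pt → Matrix (Fin 4) (Fin 4) ℝ) (U : Set Pt) : Prop where
  smooth : ∀ α β : Fin 4, ContDiffOn ℝ (⊤ : ℕ∞) (fun x => g x α β) U
  symm : ∀ x ∈ U, ∀ α β : Fin 4, g x α β = g x β α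
  det_ne : ∀ x ∈ U, (g x).det ≠ 0

section helpers

variable {f f' h : Pt → ℝ} {x : Pt} {α : Fin 4}

lemma pd_congr (heq : f =ᶠ[nhds x] f') : pd α f x = pd α f' x := by
  unfold pd; rw [heq.fderiv_eq]

lemma pd_mul (hf : DifferentiableAt ℝ f x) (hh : DifferentiableAt ℝ h x) :
    pd α (fun y => f y * h y) x = f x * pd α h x + h x * pd α f x := by
  unfold pd
  rw [fderiv_fun_mul hf hh]
  simp [mul_comm]

lemma pd_sub (hf : DifferentiableAt ℝ f x) (hh : DifferentiableAt ℝ h x) :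
    pd α (fun y => f y - h y) x = pd α f x - pd α h x := by
  unfold pd
  rw [fderiv_fun_sub hf hh]; simp

lemma pd_sum {ι : Type*} (s : Finset ι) (f : ι → Pt → ℝ)
    (hf : ∀ i ∈ s, DifferentiableAt ℝ (f i) x) :
    pd α (fun y => ∑ i ∈ s, f i y) x = ∑ i ∈ s, pd α (f i) x := by
  unfold pd
  rw [fderiv_fun_sum hf]; simp

lemma pd_inv (hf : DifferentiableAt ℝ f x) (hne : f x ≠ 0) :
    pd α (fun y => (f y)⁻¹) x = -((f x)^2)⁻¹ * pd α f x := by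
  unfold pd
  have : (fun y => (f y)⁻¹) = Inv.inv ∘ f := rfl
  rw [this, fderiv_comp x (differentiableAt_inv hne) hf]
  rw [fderiv_inv]
  simp [mul_comm]

end helpers

section smoothness

variable {U : Set Pt} {x : Pt}

lemma contDiffAt_of_contDiffOn (hU : IsOpen U) (hx : x ∈ U) {f : Pt → ℝ}
    (hf : ContDiffOn ℝ (⊤ : ℕ∞) f U) : ContDiffAt ℝ (⊤ : ℕ∞) f x :=
  (hf x hx).contDiffAt (hU.mem_nhds hx)

lemma contDiffOn_pd (hU : IsOpen U) {f : Pt → ℝ}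
    (hf : ContDiffOn ℝ (⊤ : ℕ∞) f U) (β : Fin 4) :
    ContDiffOn ℝ (⊤ : ℕ∞) (pd β f) U := by
  have h1 : ContDiffOn ℝ (⊤ : ℕ∞) (fderiv ℝ f) U :=
    hf.fderiv_of_isOpen hU (by exact_mod_cast le_top)
  exact h1.clm_apply contDiffOn_const

lemma contDiffAt_det {M : Pt → Matrix (Fin 4) (Fin 4) ℝ}
    (h : ∀ i j, ContDiffAt ℝ (⊤ : ℕ∞) (fun y => M y i j) x) :
    ContDiffAt ℝ (⊤ : ℕ∞) (fun y => (M y).det) x := by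
  have : (fun y => (M y).det) =
      fun y => ∑ σ : Equiv.Perm (Fin 4),
        ((Equiv.Perm.sign σ : ℤ) : ℝ) * ∏ i, M y (σ i) i := by
    funext y; rw [Matrix.det_apply']
  rw [this]
  apply ContDiffAt.sum
  intro σ _
  apply ContDiffAt.mul contDiffAt_const
  have : (fun y => ∏ i, M y (σ i) i) =
      fun y => M y (σ 0) 0 * (M y (σ 1) 1 * (M y (σ 2) 2 * M y (σ 3) 3)) := by
    funext y; rw [Fin.prod_univ_four]; ring
  rw [this]
  exact (h _ _).mul ((h _ _).mul ((h _ _).mul (h _ _)))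

end smoothness

section metric

variable {U : Set Pt} {g : Pt → Matrix (Fin 4) (Fin 4) ℝ} {x : Pt}

lemma contDiffAt_gdet (hU : IsOpen U) (hsm : ∀ α β : Fin 4, ContDiffOn ℝ (⊤ : ℕ∞) (fun x => g x α β) U)
    (hx : x ∈ U) : ContDiffAt ℝ (⊤ : ℕ∞) (fun y => (g y).det) x :=
  contDiffAt_det (fun i j => contDiffAt_of_contDiffOn hU hx (hsm i j))

lemma adet_pos {y : Pt} (hdet : (g y).det ≠ 0) : 0 < adet g y := abs_pos.mpr hdet

lemma contDiffAt_adet (hU : IsOpen U) (hsm : ∀ α β : Fin 4, ContDiffOn ℝ (⊤ : ℕ∞) (fun x => g x α β) U)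
    (hdet : ∀ x ∈ U, (g x).det ≠ 0) (hx : x ∈ U) :
    ContDiffAt ℝ (⊤ : ℕ∞) (adet g) x := by
  have hd := contDiffAt_gdet hU hsm hx
  have hc : ContinuousAt (fun y => (g y).det) x := hd.continuousAt
  rcases lt_or_gt_of_ne (hdet x hx) with hneg | hpos
  · have hev : ∀ᶠ y in nhds x, (g y).det < 0 := hc.eventually_lt continuousAt_const hneg
    exact hd.neg.congr_of_eventuallyEq (hev.mono fun y hy => abs_of_neg hy)
  · have hev : ∀ᶠ y in nhds x, 0 < (g y).det := continuousAt_const.eventually_lt hc hpos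
    exact hd.congr_of_eventuallyEq (hev.mono fun y hy => abs_of_pos hy)

lemma contDiffAt_sqrt_adet (hU : IsOpen U) (hsm : ∀ α β : Fin 4, ContDiffOn ℝ (⊤ : ℕ∞) (fun x => g x α β) U)
    (hdet : ∀ x ∈ U, (g x).det ≠ 0) (hx : x ∈ U) :
    ContDiffAt ℝ (⊤ : ℕ∞) (fun y => Real.sqrt (adet g y)) x :=
  (Real.contDiffAt_sqrt (adet_pos (hdet x hx)).ne').comp x (contDiffAt_adet hU hsm hdet hx)

lemma ginv_eq (y : Pt) (α β : Fin 4) :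
    ginv g y α β = ((g y).det)⁻¹ * ((g y).updateRow β (Pi.single α 1)).det := by
  rw [ginv, Matrix.inv_def, Matrix.smul_apply, Matrix.adjugate_apply,
    Ring.inverse_eq_inv', smul_eq_mul]

lemma contDiffAt_ginv (hU : IsOpen U) (hsm : ∀ α β : Fin 4, ContDiffOn ℝ (⊤ : ℕ∞) (fun x => g x α β) U)
    (hdet : ∀ x ∈ U, (g x).det ≠ 0) (hx : x ∈ U) (α β : Fin 4) :
    ContDiffAt ℝ (⊤ : ℕ∞) (fun y => ginv g y α β) x := by
  simp only [ginv_eq]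
  apply ContDiffAt.mul ((contDiffAt_gdet hU hsm hx).inv (hdet x hx))
  apply contDiffAt_det
  intro i j
  by_cases hi : i = β
  · simpa [Matrix.updateRow_apply, hi] using contDiffAt_const
  · simpa [Matrix.updateRow_apply, hi] using contDiffAt_of_contDiffOn hU hx (hsm i j)

end metric

lemma diffAt_of {f : Pt → ℝ} {x : Pt} (h : ContDiffAt ℝ (⊤ : ℕ∞) f x) :
    DifferentiableAt ℝ f x := h.differentiableAt (by simp)

theorem conformal_wave_identity'
    (U : Set Pt) (hU : IsOpen U)
    (g : Pt → Matrix (Fin 4) (Fin 4) ℝ)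
    (hsm : ∀ α β : Fin 4, ContDiffOn ℝ (⊤ : ℕ∞) (fun x => g x α β) U)
    (hsymm : ∀ x ∈ U, ∀ α β : Fin 4, g x α β = g x β α)
    (hdet : ∀ x ∈ U, (g x).det ≠ 0)
    (Ω φ F : Pt → ℝ)
    (hΩ : ContDiffOn ℝ (⊤ : ℕ∞) Ω U) (hΩpos : ∀ x ∈ U, 0 < Ω x)
    (hφ : ContDiffOn ℝ (⊤ : ℕ∞) φ U)
    (hF : ∀ x ∈ U, boxg g φ x = F x) :
    ∀ x ∈ U,
      boxg (fun y => ((Ω y) ^ 2)⁻¹ • g y) (fun y => Ω y * φ y) x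
          + ((Ω x) ^ 3 * boxg g (fun y => (Ω y)⁻¹) x) * (Ω x * φ x)
        = (Ω x) ^ 3 * F x := by
  intro x hx
  have hΩne : ∀ y ∈ U, Ω y ≠ 0 := fun y hy => (hΩpos y hy).ne'
  have hΩinv : ContDiffOn ℝ (⊤ : ℕ∞) (fun y => (Ω y)⁻¹) U := hΩ.inv hΩne
  set g' : Pt → Matrix (Fin 4) (Fin 4) ℝ := fun y => ((Ω y) ^ 2)⁻¹ • g y with hg'
  -- pointwise facts about the conformal metric
  have hsqrt_t : ∀ y ∈ U, Real.sqrt (adet g' y)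
      = ((Ω y) ^ 4)⁻¹ * Real.sqrt (adet g y) := by
    intro y hy
    have h1 : adet g' y = (((Ω y) ^ 4)⁻¹) ^ 2 * adet g y := by
      unfold adet
      rw [hg', Matrix.det_smul, abs_mul]
      congr 1
      rw [abs_of_nonneg (by positivity)]
      simp [Fintype.card_fin]
      ring
    rw [h1, Real.sqrt_mul (sq_nonneg _),
      Real.sqrt_sq (by positivity : (0:ℝ) ≤ ((Ω y) ^ 4)⁻¹)]
  have hginv_t : ∀ y ∈ U, ∀ α β : Fin 4,
      ginv g' y α β = (Ω y) ^ 2 * ginv g y α β := by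
    intro y hy α β
    have hc : ((Ω y) ^ 2 : ℝ) ≠ 0 := pow_ne_zero _ (hΩne y hy)
    have hinv : (((Ω y) ^ 2)⁻¹ • g y)⁻¹ = (Ω y) ^ 2 • (g y)⁻¹ := by
      apply Matrix.inv_eq_right_inv
      rw [Matrix.smul_mul, Matrix.mul_smul, smul_smul, inv_mul_cancel₀ hc,
        one_smul, Matrix.mul_nonsing_inv _ (isUnit_iff_ne_zero.mpr (hdet y hy))]
    show (((Ω y) ^ 2)⁻¹ • g y)⁻¹ α β = _
    rw [hinv, Matrix.smul_apply, smul_eq_mul]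
    rfl
  -- differentiability facts
  have dΩ : ∀ y ∈ U, DifferentiableAt ℝ Ω y :=
    fun y hy => diffAt_of (contDiffAt_of_contDiffOn hU hy hΩ)
  have dφ : ∀ y ∈ U, DifferentiableAt ℝ φ y :=
    fun y hy => diffAt_of (contDiffAt_of_contDiffOn hU hy hφ)
  have dΩi : ∀ y ∈ U, DifferentiableAt ℝ (fun z => (Ω z)⁻¹) y :=
    fun y hy => diffAt_of (contDiffAt_of_contDiffOn hU hy hΩinv)
  have dS : ∀ y ∈ U, DifferentiableAt ℝ (fun z => Real.sqrt (adet g z)) y :=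
    fun y hy => diffAt_of (contDiffAt_sqrt_adet hU hsm hdet hy)
  have dG : ∀ y ∈ U, ∀ α β : Fin 4, DifferentiableAt ℝ (fun z => ginv g z α β) y :=
    fun y hy α β => diffAt_of (contDiffAt_ginv hU hsm hdet hy α β)
  have dpφ : ∀ (β : Fin 4), ∀ y ∈ U, DifferentiableAt ℝ (pd β φ) y :=
    fun β y hy => diffAt_of (contDiffAt_of_contDiffOn hU hy (contDiffOn_pd hU hφ β))
  have dpΩi : ∀ (β : Fin 4), ∀ y ∈ U,
      DifferentiableAt ℝ (pd β (fun z => (Ω z)⁻¹)) y :=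
    fun β y hy => diffAt_of (contDiffAt_of_contDiffOn hU hy (contDiffOn_pd hU hΩinv β))
  -- the inner currents
  set P : Fin 4 → Pt → ℝ :=
    fun α y => Real.sqrt (adet g y) * ∑ β, ginv g y α β * pd β φ y with hP
  set Q : Fin 4 → Pt → ℝ :=
    fun α y => Real.sqrt (adet g y) * ∑ β, ginv g y α β * pd β (fun z => (Ω z)⁻¹) y with hQ
  have dP : ∀ (α : Fin 4), ∀ y ∈ U, DifferentiableAt ℝ (P α) y := by
    intro α y hy
    exact (dS y hy).mul (DifferentiableAt.fun_sum fun β _ => (dG y hy α β).mul (dpφ β y hy))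
  have dQ : ∀ (α : Fin 4), ∀ y ∈ U, DifferentiableAt ℝ (Q α) y := by
    intro α y hy
    exact (dS y hy).mul (DifferentiableAt.fun_sum fun β _ => (dG y hy α β).mul (dpΩi β y hy))
  -- Step A: rewrite the inner current of the conformal wave operator
  have stepA : ∀ α : Fin 4,
      pd α (fun y => Real.sqrt (adet g' y) *
          ∑ β, ginv g' y α β * pd β (fun z => Ω z * φ z) y) x
        = pd α (fun y => (Ω y)⁻¹ * P α y - φ y * Q α y) x := by
    intro α
    apply pd_congr
    filter_upwards [hU.mem_nhds hx] with y hy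
    have hψβ : ∀ β : Fin 4, pd β (fun z => Ω z * φ z) y
        = Ω y * pd β φ y + φ y * pd β Ω y :=
      fun β => pd_mul (dΩ y hy) (dφ y hy)
    have hΩiβ : ∀ β : Fin 4, pd β (fun z => (Ω z)⁻¹) y
        = -((Ω y) ^ 2)⁻¹ * pd β Ω y :=
      fun β => pd_inv (dΩ y hy) (hΩne y hy)
    rw [hsqrt_t y hy, hP, hQ]
    simp only [hginv_t y hy, hψβ, hΩiβ]
    simp only [Finset.mul_sum, ← Finset.sum_sub_distrib]
    apply Finset.sum_congr rfl
    intro β _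
    field_simp [hΩne y hy]
    ring
  -- Step B: expand the derivative of the rewritten current
  have stepB : ∀ α : Fin 4,
      pd α (fun y => (Ω y)⁻¹ * P α y - φ y * Q α y) x
        = ((Ω x)⁻¹ * pd α (P α) x + P α x * pd α (fun z => (Ω z)⁻¹) x)
          - (φ x * pd α (Q α) x + Q α x * pd α φ x) := by
    intro α
    rw [pd_sub ((dΩi x hx).fun_mul (dP α x hx)) ((dφ x hx).fun_mul (dQ α x hx)),
      pd_mul (dΩi x hx) (dP α x hx), pd_mul (dφ x hx) (dQ α x hx)]
  -- Step C: the cross terms cancel by symmetry of the inverse metric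
  have hsym : ∀ α β : Fin 4, ginv g x α β = ginv g x β α := by
    intro α β
    have hT : (g x).transpose = g x := Matrix.ext fun i j => hsymm x hx j i
    have h2 : ((g x)⁻¹).transpose = (g x)⁻¹ := by
      rw [Matrix.transpose_nonsing_inv, hT]
    show (g x)⁻¹ α β = (g x)⁻¹ β α
    conv_lhs => rw [← h2]
    rw [Matrix.transpose_apply]
  have stepC : ∑ α, P α x * pd α (fun z => (Ω z)⁻¹) x
      = ∑ α, Q α x * pd α φ x := by
    rw [hP, hQ]
    simp only [Finset.sum_mul, Finset.mul_sum]
    rw [Finset.sum_comm]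
    apply Finset.sum_congr rfl
    intro i _
    apply Finset.sum_congr rfl
    intro j _
    rw [hsym j i]
    ring
  -- assemble
  have hbox : boxg g' (fun y => Ω y * φ y) x
      = (Ω x) ^ 3 * boxg g φ x
        - (Ω x) ^ 4 * φ x * boxg g (fun y => (Ω y)⁻¹) x := by
    unfold boxg
    rw [Finset.sum_congr rfl fun α _ => (stepA α).trans (stepB α)]
    rw [Finset.sum_sub_distrib, Finset.sum_add_distrib, Finset.sum_add_distrib, stepC]
    rw [hsqrt_t x hx, ← Finset.mul_sum, ← Finset.mul_sum]
    rw [mul_inv, inv_inv]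
    have hQfold : (∑ α : Fin 4, pd α (fun y => Real.sqrt (adet g y) *
        ∑ β : Fin 4, ginv g y α β * pd β (fun z => (Ω z)⁻¹) y) x)
        = ∑ α : Fin 4, pd α (Q α) x := rfl
    rw [hQfold]
    generalize (∑ i : Fin 4, pd i (P i) x) = A
    generalize (∑ i : Fin 4, pd i (Q i) x) = B
    have hs : Real.sqrt (adet g x) ≠ 0 :=
      (Real.sqrt_pos.mpr (adet_pos (hdet x hx))).ne'
    field_simp [hΩne x hx, hs]
    ring
  rw [hbox, hF x hx]
  ring

/-- the conformal wave operator identity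
`□_{g̃} ψ + V ψ = Ω³ F` with `g̃ = Ω⁻² g`, `ψ = Ω φ`, `V = Ω³ □_g (Ω⁻¹)`. -/
theorem conformal_wave_identity
    (U : Set Pt) (hU : IsOpen U)
    (g : Pt → Matrix (Fin 4) (Fin 4) ℝ) (hg : IsMetricOn g U)
    (Ω φ F : Pt → ℝ)
    (hΩ : ContDiffOn ℝ (⊤ : ℕ∞) Ω U) (hΩpos : ∀ x ∈ U, 0 < Ω x)
    (hφ : ContDiffOn ℝ (⊤ : ℕ∞) φ U)
    (hF : ∀ x ∈ U, boxg g φ x = F x) :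
    ∀ x ∈ U,
      boxg (fun y => ((Ω y) ^ 2)⁻¹ • g y) (fun y => Ω y * φ y) x
          + ((Ω x) ^ 3 * boxg g (fun y => (Ω y)⁻¹) x) * (Ω x * φ x)
        = (Ω x) ^ 3 * F x :=
  conformal_wave_identity' U hU g hg.smooth hg.symm hg.det_ne Ω φ F hΩ hΩpos hφ hF
end
end

section
/- Let g be a metric on an open set U ⊆ ℝ⁴ and let X = X^α∂_α be a smooth vector field on U. Then the normalized deformation tensor of X satisfies, pointwise on U, π̂^{αβ} = −|g|^{-1/2} X(|g|^{1/2} g^{αβ}) − g^{αβ} ∂_γX^γ + g^{αγ}∂_γX^β + g^{βγ}∂_γX^α. -/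
noncomputable section

/-- `X f = X^α ∂_α f`. -/
def Xapp (X : Fin 4 → Pt → ℝ) (f : Pt → ℝ) (x : Pt) : ℝ := ∑ γ : Fin 4, X γ x * pd γ f x

/-- Deformation tensor `π_{αβ} = (L_X g)_{αβ}` of `X` (lower indices). -/
def piLow (g : Pt → Matrix (Fin 4) (Fin 4) ℝ) (X : Fin 4 → Pt → ℝ) (x : Pt) (α β : Fin 4) : ℝ :=
  (∑ γ : Fin 4, X γ x * pd γ (fun y => g y α β) x)
    + (∑ γ : Fin 4, g x γ β * pd α (X γ) x) + (∑ γ : Fin 4, g x α γ * pd β (X γ) x)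

/-- Raised deformation tensor `π^{αβ}`. -/
def piUp (g : Pt → Matrix (Fin 4) (Fin 4) ℝ) (X : Fin 4 → Pt → ℝ) (x : Pt) (α β : Fin 4) : ℝ :=
  ∑ α' : Fin 4, ∑ β' : Fin 4, ginv g x α α' * ginv g x β β' * piLow g X x α' β'

/-- Normalized deformation tensor `π̂^{αβ} = π^{αβ} - (1/2) g^{αβ} (g_{γδ} π^{γδ})`. -/
def hatPi (g : Pt → Matrix (Fin 4) (Fin 4) ℝ) (X : Fin 4 → Pt → ℝ) (x : Pt) (α β : Fin 4) : ℝ :=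
  piUp g X x α β - (1/2) * ginv g x α β * (∑ γ : Fin 4, ∑ δ : Fin 4, g x γ δ * piUp g X x γ δ)

/-! ### Auxiliary: directional derivative calculus -/

/-- `f` is differentiable at `x` with coordinate directional derivatives `D γ`. -/
def HasPd (f : Pt → ℝ) (x : Pt) (D : Fin 4 → ℝ) : Prop :=
  ∃ L : Pt →L[ℝ] ℝ, HasFDerivAt f L x ∧ ∀ γ, L (Pi.single γ 1) = D γ

namespace HasPd

variable {f h : Pt → ℝ} {x : Pt} {D E : Fin 4 → ℝ}

theorem diff (hf : HasPd f x D) : DifferentiableAt ℝ f x :=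
  hf.choose_spec.1.differentiableAt

theorem pd_eq (hf : HasPd f x D) (γ : Fin 4) : pd γ f x = D γ := by
  obtain ⟨L, hL, hD⟩ := hf
  rw [pd, hL.fderiv]; exact hD γ

theorem unique (h1 : HasPd f x D) (h2 : HasPd f x E) : D = E :=
  funext fun γ => (h1.pd_eq γ).symm.trans (h2.pd_eq γ)

theorem congr_nhds (hf : HasPd f x D) (hfh : h =ᶠ[nhds x] f) : HasPd h x D := by
  obtain ⟨L, hL, hD⟩ := hf
  exact ⟨L, hL.congr_of_eventuallyEq hfh, hD⟩

theorem of_differentiableAt (hf : DifferentiableAt ℝ f x) :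
    HasPd f x (fun γ => pd γ f x) :=
  ⟨fderiv ℝ f x, hf.hasFDerivAt, fun _ => rfl⟩

theorem const (c : ℝ) (x : Pt) : HasPd (fun _ => c) x (fun _ => 0) :=
  ⟨0, hasFDerivAt_const c x, fun _ => rfl⟩

theorem sum {ι : Type*} {u : Finset ι} {f : ι → Pt → ℝ} {D : ι → Fin 4 → ℝ}
    (hf : ∀ i, HasPd (f i) x (D i)) :
    HasPd (fun y => ∑ i ∈ u, f i y) x (fun γ => ∑ i ∈ u, D i γ) := by
  choose L hL hD using hf
  refine ⟨∑ i ∈ u, L i, HasFDerivAt.fun_sum fun i _ => hL i, fun γ => ?_⟩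
  simp [hD]

theorem mul (hf : HasPd f x D) (hh : HasPd h x E) :
    HasPd (fun y => f y * h y) x (fun γ => D γ * h x + f x * E γ) := by
  obtain ⟨L, hL, hD⟩ := hf
  obtain ⟨M, hM, hE⟩ := hh
  refine ⟨f x • M + h x • L, hL.mul hM, fun γ => ?_⟩
  simp [hD, hE]; ring

theorem const_mul (hf : HasPd f x D) (c : ℝ) :
    HasPd (fun y => c * f y) x (fun γ => c * D γ) := by
  have := (HasPd.const c x).mul hf
  simpa using this

theorem finset_prod {ι : Type*} [DecidableEq ι] {u : Finset ι} {f : ι → Pt → ℝ}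
    {D : ι → Fin 4 → ℝ} (hf : ∀ i, HasPd (f i) x (D i)) :
    HasPd (fun y => ∏ i ∈ u, f i y) x
      (fun γ => ∑ i ∈ u, (∏ j ∈ u.erase i, f j x) * D i γ) := by
  choose L hL hD using hf
  refine ⟨∑ i ∈ u, (∏ j ∈ u.erase i, f j x) • L i,
    HasFDerivAt.finset_prod fun i _ => hL i, fun γ => ?_⟩
  simp [hD]

theorem inv (hf : HasPd f x D) (hne : f x ≠ 0) :
    HasPd (fun y => (f y)⁻¹) x (fun γ => -(D γ / f x ^ 2)) := by
  obtain ⟨L, hL, hD⟩ := hf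
  refine ⟨(-(f x ^ 2)⁻¹) • L, (hasDerivAt_inv hne).comp_hasFDerivAt x hL, fun γ => ?_⟩
  simp [hD]; ring

theorem sqrt (hf : HasPd f x D) (hpos : 0 < f x) :
    HasPd (fun y => Real.sqrt (f y)) x (fun γ => D γ / (2 * Real.sqrt (f x))) := by
  obtain ⟨L, hL, hD⟩ := hf
  refine ⟨(1 / (2 * Real.sqrt (f x))) • L,
    (Real.hasDerivAt_sqrt hpos.ne').comp_hasFDerivAt x hL, fun γ => ?_⟩
  simp [hD]; ring

end HasPd

/-! ### Auxiliary: derivative of the determinant -/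

theorem det_eq_sum_perm (A : Matrix (Fin 4) (Fin 4) ℝ) :
    A.det = ∑ σ : Equiv.Perm (Fin 4),
      ((Equiv.Perm.sign σ : ℤ) : ℝ) * ∏ i, A i (σ i) := by
  rw [← Matrix.det_transpose A, Matrix.det_apply']
  exact Finset.sum_congr rfl fun σ _ => by simp [Matrix.transpose_apply]

theorem hasPd_det (M : Pt → Matrix (Fin 4) (Fin 4) ℝ) {x : Pt}
    {D : Fin 4 → Fin 4 → Fin 4 → ℝ}
    (h : ∀ μ ν, HasPd (fun y => M y μ ν) x (D μ ν)) :
    HasPd (fun y => (M y).det) x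
      (fun γ => ∑ μ, ((M x).updateRow μ (fun ν => D μ ν γ)).det) := by
  have key : HasPd (fun y => ∑ σ : Equiv.Perm (Fin 4),
        ((Equiv.Perm.sign σ : ℤ) : ℝ) * ∏ i, M y i (σ i)) x
      (fun γ => ∑ σ : Equiv.Perm (Fin 4), ((Equiv.Perm.sign σ : ℤ) : ℝ) *
        ∑ μ, (∏ j ∈ Finset.univ.erase μ, M x j (σ j)) * D μ (σ μ) γ) :=
    HasPd.sum fun σ => (HasPd.finset_prod fun i => h i (σ i)).const_mul _
  have hf : (fun y => (M y).det) = (fun y => ∑ σ : Equiv.Perm (Fin 4),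
      ((Equiv.Perm.sign σ : ℤ) : ℝ) * ∏ i, M y i (σ i)) :=
    funext fun y => det_eq_sum_perm (M y)
  have hD : (fun γ => ∑ μ, ((M x).updateRow μ (fun ν => D μ ν γ)).det)
      = (fun γ => ∑ σ : Equiv.Perm (Fin 4), ((Equiv.Perm.sign σ : ℤ) : ℝ) *
        ∑ μ, (∏ j ∈ Finset.univ.erase μ, M x j (σ j)) * D μ (σ μ) γ) := by
    funext γ
    have h1 : ∀ (μ : Fin 4) (σ : Equiv.Perm (Fin 4)),
        (∏ i, ((M x).updateRow μ (fun ν => D μ ν γ)) i (σ i))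
          = D μ (σ μ) γ * ∏ j ∈ Finset.univ.erase μ, M x j (σ j) := by
      intro μ σ
      rw [← Finset.mul_prod_erase Finset.univ _ (Finset.mem_univ μ)]
      congr 1
      · simp
      · exact Finset.prod_congr rfl fun j hj => by
          rw [Matrix.updateRow_apply, if_neg (Finset.ne_of_mem_erase hj)]
    calc ∑ μ, ((M x).updateRow μ (fun ν => D μ ν γ)).det
        = ∑ μ, ∑ σ : Equiv.Perm (Fin 4), ((Equiv.Perm.sign σ : ℤ) : ℝ) *
            (D μ (σ μ) γ * ∏ j ∈ Finset.univ.erase μ, M x j (σ j)) := by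
          refine Finset.sum_congr rfl fun μ _ => ?_
          rw [det_eq_sum_perm]
          exact Finset.sum_congr rfl fun σ _ => by rw [h1]
      _ = _ := by
          rw [Finset.sum_comm]
          refine Finset.sum_congr rfl fun σ _ => ?_
          rw [Finset.mul_sum]
          exact Finset.sum_congr rfl fun μ _ => by ring
  rw [hf, hD]; exact key

theorem det_updateRow_eq {A : Matrix (Fin 4) (Fin 4) ℝ} (hA : A.det ≠ 0) (μ : Fin 4)
    (r : Fin 4 → ℝ) :
    (A.updateRow μ r).det = A.det * ∑ ν, A⁻¹ ν μ * r ν := by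
  have hadj : ∀ ν, A.adjugate ν μ = A.det * A⁻¹ ν μ := by
    intro ν
    have h1 : A⁻¹ ν μ = (A.det)⁻¹ * A.adjugate ν μ := by
      rw [Matrix.inv_def, Ring.inverse_eq_inv', Matrix.smul_apply, smul_eq_mul]
    rw [h1]; field_simp
  have hsingle : ∀ ν, (A.updateRow μ (Pi.single ν 1 : Pt)).det = A.det * A⁻¹ ν μ := by
    intro ν; rw [← Matrix.adjugate_apply, hadj]
  have hr : r = r 0 • (Pi.single 0 1 : Pt) + r 1 • (Pi.single 1 1 : Pt)
      + r 2 • (Pi.single 2 1 : Pt) + r 3 • (Pi.single 3 1 : Pt) := by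
    funext j; fin_cases j <;> simp [Pi.single_apply]
  conv_lhs => rw [hr]
  rw [Matrix.det_updateRow_add, Matrix.det_updateRow_add, Matrix.det_updateRow_add,
    Matrix.det_updateRow_smul, Matrix.det_updateRow_smul, Matrix.det_updateRow_smul,
    Matrix.det_updateRow_smul, hsingle, hsingle, hsingle, hsingle, Fin.sum_univ_four]
  ring

/-! ### Auxiliary: pointwise tensor algebra -/

section Algebra

variable (G H : Matrix (Fin 4) (Fin 4) ℝ)

theorem LP2 (DX : Fin 4 → Fin 4 → ℝ)
    (hGs : ∀ μ ν, G μ ν = G ν μ)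
    (hHG : ∀ μ ν, (∑ κ, H μ κ * G κ ν) = if μ = ν then 1 else 0)
    (a b : Fin 4) :
    (∑ α', ∑ β', H a α' * H b β' * (∑ γ, G γ β' * DX α' γ)) = ∑ γ, H a γ * DX γ b := by
  calc (∑ α', ∑ β', H a α' * H b β' * (∑ γ, G γ β' * DX α' γ))
      = ∑ α', ∑ β', ∑ γ, (H a α' * DX α' γ) * (H b β' * G β' γ) := by
        refine Finset.sum_congr rfl fun α' _ => Finset.sum_congr rfl fun β' _ => ?_
        rw [Finset.mul_sum]
        exact Finset.sum_congr rfl fun γ _ => by rw [hGs γ β']; ring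
    _ = ∑ α', ∑ γ, ∑ β', (H a α' * DX α' γ) * (H b β' * G β' γ) :=
        Finset.sum_congr rfl fun α' _ => Finset.sum_comm
    _ = ∑ α', ∑ γ, (H a α' * DX α' γ) * (if b = γ then 1 else 0) := by
        refine Finset.sum_congr rfl fun α' _ => Finset.sum_congr rfl fun γ _ => ?_
        rw [← Finset.mul_sum, hHG b γ]
    _ = ∑ γ, H a γ * DX γ b := by
        refine Finset.sum_congr rfl fun α' _ => ?_
        simp

theorem LP3 (DX : Fin 4 → Fin 4 → ℝ)
    (hGs : ∀ μ ν, G μ ν = G ν μ)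
    (hHG : ∀ μ ν, (∑ κ, H μ κ * G κ ν) = if μ = ν then 1 else 0)
    (a b : Fin 4) :
    (∑ α', ∑ β', H a α' * H b β' * (∑ γ, G α' γ * DX β' γ)) = ∑ γ, H b γ * DX γ a := by
  calc (∑ α', ∑ β', H a α' * H b β' * (∑ γ, G α' γ * DX β' γ))
      = ∑ β', ∑ α', H b β' * H a α' * (∑ γ, G γ α' * DX β' γ) := by
        rw [Finset.sum_comm]
        refine Finset.sum_congr rfl fun β' _ => Finset.sum_congr rfl fun α' _ => ?_
        rw [show (∑ γ, G α' γ * DX β' γ) = ∑ γ, G γ α' * DX β' γ from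
          Finset.sum_congr rfl fun γ _ => by rw [hGs α' γ]]
        ring
    _ = ∑ γ, H b γ * DX γ a := LP2 G H DX hGs hHG b a

theorem LP1 (Dg : Fin 4 → Fin 4 → Fin 4 → ℝ) (Xv : Fin 4 → ℝ) (a b : Fin 4) :
    (∑ α', ∑ β', H a α' * H b β' * (∑ γ, Xv γ * Dg α' β' γ))
      = ∑ γ, Xv γ * (∑ μ, ∑ ν, H a μ * H b ν * Dg μ ν γ) := by
  calc (∑ α', ∑ β', H a α' * H b β' * (∑ γ, Xv γ * Dg α' β' γ))
      = ∑ α', ∑ β', ∑ γ, Xv γ * (H a α' * H b β' * Dg α' β' γ) := by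
        refine Finset.sum_congr rfl fun α' _ => Finset.sum_congr rfl fun β' _ => ?_
        rw [Finset.mul_sum]
        exact Finset.sum_congr rfl fun γ _ => by ring
    _ = ∑ α', ∑ γ, ∑ β', Xv γ * (H a α' * H b β' * Dg α' β' γ) :=
        Finset.sum_congr rfl fun α' _ => Finset.sum_comm
    _ = ∑ γ, ∑ α', ∑ β', Xv γ * (H a α' * H b β' * Dg α' β' γ) := Finset.sum_comm
    _ = ∑ γ, Xv γ * (∑ μ, ∑ ν, H a μ * H b ν * Dg μ ν γ) := by
        refine Finset.sum_congr rfl fun γ _ => ?_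
        rw [Finset.mul_sum]
        exact Finset.sum_congr rfl fun μ _ => by rw [Finset.mul_sum]

theorem LC (w : Fin 4 → Fin 4 → ℝ)
    (hGH : ∀ μ ν, (∑ κ, G μ κ * H κ ν) = if μ = ν then 1 else 0) :
    (∑ γ, ∑ δ, G γ δ * (∑ μ, ∑ ν, H γ μ * H δ ν * w μ ν)) = ∑ μ, ∑ ν, H ν μ * w μ ν := by
  calc (∑ γ, ∑ δ, G γ δ * (∑ μ, ∑ ν, H γ μ * H δ ν * w μ ν))
      = ∑ γ, ∑ δ, ∑ μ, ∑ ν, (H γ μ * w μ ν) * (G γ δ * H δ ν) := by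
        refine Finset.sum_congr rfl fun γ _ => Finset.sum_congr rfl fun δ _ => ?_
        rw [Finset.mul_sum]
        refine Finset.sum_congr rfl fun μ _ => ?_
        rw [Finset.mul_sum]
        exact Finset.sum_congr rfl fun ν _ => by ring
    _ = ∑ γ, ∑ μ, ∑ δ, ∑ ν, (H γ μ * w μ ν) * (G γ δ * H δ ν) :=
        Finset.sum_congr rfl fun γ _ => Finset.sum_comm
    _ = ∑ γ, ∑ μ, ∑ ν, ∑ δ, (H γ μ * w μ ν) * (G γ δ * H δ ν) :=
        Finset.sum_congr rfl fun γ _ => Finset.sum_congr rfl fun μ _ => Finset.sum_comm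
    _ = ∑ γ, ∑ μ, ∑ ν, (H γ μ * w μ ν) * (if γ = ν then 1 else 0) := by
        refine Finset.sum_congr rfl fun γ _ => Finset.sum_congr rfl fun μ _ =>
          Finset.sum_congr rfl fun ν _ => ?_
        rw [← Finset.mul_sum, hGH γ ν]
    _ = ∑ γ, ∑ μ, H γ μ * w μ γ := by
        refine Finset.sum_congr rfl fun γ _ => Finset.sum_congr rfl fun μ _ => ?_
        simp
    _ = ∑ μ, ∑ ν, H ν μ * w μ ν := Finset.sum_comm

theorem LTA (Dg : Fin 4 → Fin 4 → Fin 4 → ℝ) (Xv : Fin 4 → ℝ)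
    (hGH : ∀ μ ν, (∑ κ, G μ κ * H κ ν) = if μ = ν then 1 else 0) :
    (∑ γ, ∑ δ, G γ δ * (∑ ρ, Xv ρ * (∑ μ, ∑ ν, H γ μ * H δ ν * Dg μ ν ρ)))
      = ∑ ρ, Xv ρ * (∑ μ, ∑ ν, H ν μ * Dg μ ν ρ) := by
  calc (∑ γ, ∑ δ, G γ δ * (∑ ρ, Xv ρ * (∑ μ, ∑ ν, H γ μ * H δ ν * Dg μ ν ρ)))
      = ∑ γ, ∑ δ, ∑ ρ, Xv ρ * (G γ δ * (∑ μ, ∑ ν, H γ μ * H δ ν * Dg μ ν ρ)) := by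
        refine Finset.sum_congr rfl fun γ _ => Finset.sum_congr rfl fun δ _ => ?_
        rw [Finset.mul_sum]
        exact Finset.sum_congr rfl fun ρ _ => by ring
    _ = ∑ γ, ∑ ρ, ∑ δ, Xv ρ * (G γ δ * (∑ μ, ∑ ν, H γ μ * H δ ν * Dg μ ν ρ)) :=
        Finset.sum_congr rfl fun γ _ => Finset.sum_comm
    _ = ∑ ρ, ∑ γ, ∑ δ, Xv ρ * (G γ δ * (∑ μ, ∑ ν, H γ μ * H δ ν * Dg μ ν ρ)) :=
        Finset.sum_comm
    _ = ∑ ρ, Xv ρ * (∑ γ, ∑ δ, G γ δ * (∑ μ, ∑ ν, H γ μ * H δ ν * Dg μ ν ρ)) := by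
        refine Finset.sum_congr rfl fun ρ _ => ?_
        rw [Finset.mul_sum]
        exact Finset.sum_congr rfl fun γ _ => by rw [Finset.mul_sum]
    _ = ∑ ρ, Xv ρ * (∑ μ, ∑ ν, H ν μ * Dg μ ν ρ) := by
        refine Finset.sum_congr rfl fun ρ _ => ?_
        rw [LC G H _ hGH]

theorem LTB (DX : Fin 4 → Fin 4 → ℝ)
    (hHs : ∀ μ ν, H μ ν = H ν μ)
    (hHG : ∀ μ ν, (∑ κ, H μ κ * G κ ν) = if μ = ν then 1 else 0) :
    (∑ γ, ∑ δ, G γ δ * (∑ ρ, H γ ρ * DX ρ δ)) = ∑ ρ, DX ρ ρ := by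
  calc (∑ γ, ∑ δ, G γ δ * (∑ ρ, H γ ρ * DX ρ δ))
      = ∑ γ, ∑ δ, ∑ ρ, DX ρ δ * (H ρ γ * G γ δ) := by
        refine Finset.sum_congr rfl fun γ _ => Finset.sum_congr rfl fun δ _ => ?_
        rw [Finset.mul_sum]
        exact Finset.sum_congr rfl fun ρ _ => by rw [hHs γ ρ]; ring
    _ = ∑ δ, ∑ γ, ∑ ρ, DX ρ δ * (H ρ γ * G γ δ) := Finset.sum_comm
    _ = ∑ δ, ∑ ρ, ∑ γ, DX ρ δ * (H ρ γ * G γ δ) :=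
        Finset.sum_congr rfl fun δ _ => Finset.sum_comm
    _ = ∑ δ, ∑ ρ, DX ρ δ * (if ρ = δ then 1 else 0) := by
        refine Finset.sum_congr rfl fun δ _ => Finset.sum_congr rfl fun ρ _ => ?_
        rw [← Finset.mul_sum, hHG ρ δ]
    _ = ∑ ρ, DX ρ ρ := by
        refine Finset.sum_congr rfl fun δ _ => ?_
        simp

theorem LTC (DX : Fin 4 → Fin 4 → ℝ)
    (hGH : ∀ μ ν, (∑ κ, G μ κ * H κ ν) = if μ = ν then 1 else 0) :
    (∑ γ, ∑ δ, G γ δ * (∑ ρ, H δ ρ * DX ρ γ)) = ∑ ρ, DX ρ ρ := by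
  calc (∑ γ, ∑ δ, G γ δ * (∑ ρ, H δ ρ * DX ρ γ))
      = ∑ γ, ∑ δ, ∑ ρ, DX ρ γ * (G γ δ * H δ ρ) := by
        refine Finset.sum_congr rfl fun γ _ => Finset.sum_congr rfl fun δ _ => ?_
        rw [Finset.mul_sum]
        exact Finset.sum_congr rfl fun ρ _ => by ring
    _ = ∑ γ, ∑ ρ, ∑ δ, DX ρ γ * (G γ δ * H δ ρ) :=
        Finset.sum_congr rfl fun γ _ => Finset.sum_comm
    _ = ∑ γ, ∑ ρ, DX ρ γ * (if γ = ρ then 1 else 0) := by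
        refine Finset.sum_congr rfl fun γ _ => Finset.sum_congr rfl fun ρ _ => ?_
        rw [← Finset.mul_sum, hGH γ ρ]
    _ = ∑ ρ, DX ρ ρ := by
        refine Finset.sum_congr rfl fun γ _ => ?_
        simp

theorem final_algebra (Dg : Fin 4 → Fin 4 → Fin 4 → ℝ)
    (DX : Fin 4 → Fin 4 → ℝ) (Xv : Fin 4 → ℝ)
    (hGs : ∀ μ ν, G μ ν = G ν μ) (hHs : ∀ μ ν, H μ ν = H ν μ)
    (hHG : ∀ μ ν, (∑ κ, H μ κ * G κ ν) = if μ = ν then 1 else 0)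
    (hGH : ∀ μ ν, (∑ κ, G μ κ * H κ ν) = if μ = ν then 1 else 0)
    (a b : Fin 4) :
    (∑ α', ∑ β', H a α' * H b β' *
        ((∑ γ, Xv γ * Dg α' β' γ) + (∑ γ, G γ β' * DX α' γ) + (∑ γ, G α' γ * DX β' γ)))
      - (1/2) * H a b * (∑ γ, ∑ δ, G γ δ *
          (∑ α', ∑ β', H γ α' * H δ β' *
            ((∑ ρ, Xv ρ * Dg α' β' ρ) + (∑ ρ, G ρ β' * DX α' ρ) + (∑ ρ, G α' ρ * DX β' ρ))))
    = -(∑ γ, Xv γ * ((1/2) * (∑ μ, ∑ ν, H ν μ * Dg μ ν γ) * H a b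
          + -(∑ μ, ∑ ν, H a μ * H ν b * Dg μ ν γ)))
      - H a b * (∑ γ, DX γ γ) + (∑ γ, H a γ * DX γ b) + (∑ γ, H b γ * DX γ a) := by
  have hpiU : ∀ p q : Fin 4,
      (∑ α', ∑ β', H p α' * H q β' *
        ((∑ γ, Xv γ * Dg α' β' γ) + (∑ γ, G γ β' * DX α' γ) + (∑ γ, G α' γ * DX β' γ)))
      = (∑ γ, Xv γ * (∑ μ, ∑ ν, H p μ * H q ν * Dg μ ν γ))
        + (∑ γ, H p γ * DX γ q) + (∑ γ, H q γ * DX γ p) := by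
    intro p q
    have hsplit : (∑ α', ∑ β', H p α' * H q β' *
        ((∑ γ, Xv γ * Dg α' β' γ) + (∑ γ, G γ β' * DX α' γ) + (∑ γ, G α' γ * DX β' γ)))
        = (∑ α', ∑ β', H p α' * H q β' * (∑ γ, Xv γ * Dg α' β' γ))
          + (∑ α', ∑ β', H p α' * H q β' * (∑ γ, G γ β' * DX α' γ))
          + (∑ α', ∑ β', H p α' * H q β' * (∑ γ, G α' γ * DX β' γ)) := by
      rw [← Finset.sum_add_distrib, ← Finset.sum_add_distrib]
      refine Finset.sum_congr rfl fun α' _ => ?_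
      rw [← Finset.sum_add_distrib, ← Finset.sum_add_distrib]
      exact Finset.sum_congr rfl fun β' _ => by ring
    rw [hsplit, LP1 H Dg Xv p q, LP2 G H DX hGs hHG p q, LP3 G H DX hGs hHG p q]
  have htrace : (∑ γ, ∑ δ, G γ δ *
        (∑ α', ∑ β', H γ α' * H δ β' *
          ((∑ ρ, Xv ρ * Dg α' β' ρ) + (∑ ρ, G ρ β' * DX α' ρ) + (∑ ρ, G α' ρ * DX β' ρ))))
      = (∑ ρ, Xv ρ * (∑ μ, ∑ ν, H ν μ * Dg μ ν ρ)) + (∑ ρ, DX ρ ρ) + (∑ ρ, DX ρ ρ) := by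
    have h1 : ∀ γ δ : Fin 4, G γ δ *
        (∑ α', ∑ β', H γ α' * H δ β' *
          ((∑ ρ, Xv ρ * Dg α' β' ρ) + (∑ ρ, G ρ β' * DX α' ρ) + (∑ ρ, G α' ρ * DX β' ρ)))
        = G γ δ * (∑ ρ, Xv ρ * (∑ μ, ∑ ν, H γ μ * H δ ν * Dg μ ν ρ))
          + G γ δ * (∑ ρ, H γ ρ * DX ρ δ) + G γ δ * (∑ ρ, H δ ρ * DX ρ γ) := by
      intro γ δ
      rw [hpiU γ δ]; ring
    calc (∑ γ, ∑ δ, G γ δ *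
        (∑ α', ∑ β', H γ α' * H δ β' *
          ((∑ ρ, Xv ρ * Dg α' β' ρ) + (∑ ρ, G ρ β' * DX α' ρ) + (∑ ρ, G α' ρ * DX β' ρ))))
        = (∑ γ, ∑ δ, G γ δ * (∑ ρ, Xv ρ * (∑ μ, ∑ ν, H γ μ * H δ ν * Dg μ ν ρ)))
          + (∑ γ, ∑ δ, G γ δ * (∑ ρ, H γ ρ * DX ρ δ))
          + (∑ γ, ∑ δ, G γ δ * (∑ ρ, H δ ρ * DX ρ γ)) := by
          rw [← Finset.sum_add_distrib, ← Finset.sum_add_distrib]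
          refine Finset.sum_congr rfl fun γ _ => ?_
          rw [← Finset.sum_add_distrib, ← Finset.sum_add_distrib]
          exact Finset.sum_congr rfl fun δ _ => h1 γ δ
      _ = _ := by
          rw [LTA G H Dg Xv hGH, LTB G H DX hHs hHG, LTC G H DX hGH]
  have hR : (∑ γ, Xv γ * ((1/2) * (∑ μ, ∑ ν, H ν μ * Dg μ ν γ) * H a b
        + -(∑ μ, ∑ ν, H a μ * H ν b * Dg μ ν γ)))
      = (1/2) * H a b * (∑ γ, Xv γ * (∑ μ, ∑ ν, H ν μ * Dg μ ν γ))
        - (∑ γ, Xv γ * (∑ μ, ∑ ν, H a μ * H b ν * Dg μ ν γ)) := by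
    rw [Finset.mul_sum, ← Finset.sum_sub_distrib]
    refine Finset.sum_congr rfl fun γ _ => ?_
    rw [show (∑ μ, ∑ ν, H a μ * H ν b * Dg μ ν γ) = ∑ μ, ∑ ν, H a μ * H b ν * Dg μ ν γ from
      Finset.sum_congr rfl fun μ _ => Finset.sum_congr rfl fun ν _ => by rw [hHs ν b]]
    ring
  rw [hpiU a b, htrace, hR]
  ring

end Algebra

/-- coordinate formula for the normalized deformation tensor:
`π̂^{αβ} = -|g|^{-1/2} X(|g|^{1/2} g^{αβ}) - g^{αβ} ∂_γ X^γ + g^{αγ}∂_γ X^β + g^{βγ}∂_γ X^α`. -/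
theorem hatPi_coordinate_formula
    (U : Set Pt) (hU : IsOpen U)
    (g : Pt → Matrix (Fin 4) (Fin 4) ℝ) (hg : IsMetricOn g U)
    (X : Fin 4 → Pt → ℝ) (hX : ∀ α, ContDiffOn ℝ (⊤ : ℕ∞) (X α) U) :
    ∀ x ∈ U, ∀ α β : Fin 4,
      hatPi g X x α β =
        -((Real.sqrt (adet g x))⁻¹ *
            Xapp X (fun y => Real.sqrt (adet g y) * ginv g y α β) x)
          - ginv g x α β * (∑ γ : Fin 4, pd γ (X γ) x)
          + (∑ γ : Fin 4, ginv g x α γ * pd γ (X β) x)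
          + (∑ γ : Fin 4, ginv g x β γ * pd γ (X α) x) := by
  intro x hx α β
  have hnx : U ∈ nhds x := hU.mem_nhds hx
  have hdetne : (g x).det ≠ 0 := hg.det_ne x hx
  -- differentiability of the metric entries
  have hgd : ∀ μ ν : Fin 4, DifferentiableAt ℝ (fun y => g y μ ν) x := fun μ ν =>
    ((hg.smooth μ ν).contDiffAt hnx).differentiableAt (by simp)
  have hgPd : ∀ μ ν : Fin 4, HasPd (fun y => g y μ ν) x
      (fun γ => pd γ (fun y => g y μ ν) x) := fun μ ν =>
    HasPd.of_differentiableAt (hgd μ ν)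
  -- symmetry facts
  have hGs : ∀ μ ν, g x μ ν = g x ν μ := hg.symm x hx
  have hTs : ((g x)⁻¹).transpose = (g x)⁻¹ := by
    rw [Matrix.transpose_nonsing_inv]
    congr 1
    exact Matrix.ext fun i j => hGs j i
  have hHs : ∀ μ ν, (g x)⁻¹ μ ν = (g x)⁻¹ ν μ := by
    intro μ ν
    conv_lhs => rw [← hTs]
    exact Matrix.transpose_apply _ _ _
  -- inverse relations
  have hHG : ∀ μ ν, (∑ κ, (g x)⁻¹ μ κ * g x κ ν) = if μ = ν then 1 else 0 := by
    intro μ ν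
    rw [← Matrix.mul_apply, Matrix.nonsing_inv_mul _ (isUnit_iff_ne_zero.mpr hdetne),
      Matrix.one_apply]
  have hGH : ∀ μ ν, (∑ κ, g x μ κ * (g x)⁻¹ κ ν) = if μ = ν then 1 else 0 := by
    intro μ ν
    rw [← Matrix.mul_apply, Matrix.mul_nonsing_inv _ (isUnit_iff_ne_zero.mpr hdetne),
      Matrix.one_apply]
  -- derivative of the determinant (Jacobi's formula)
  have hdetPd : HasPd (fun y => (g y).det) x
      (fun γ => (g x).det * ∑ μ, ∑ ν, (g x)⁻¹ ν μ * pd γ (fun y => g y μ ν) x) := by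
    have h0 := hasPd_det g hgPd
    have hDeq : (fun γ => ∑ μ, ((g x).updateRow μ
          (fun ν => pd γ (fun y => g y μ ν) x)).det)
        = (fun γ => (g x).det * ∑ μ, ∑ ν, (g x)⁻¹ ν μ * pd γ (fun y => g y μ ν) x) := by
      funext γ
      rw [Finset.sum_congr rfl fun μ _ => det_updateRow_eq hdetne μ _, ← Finset.mul_sum]
    rw [← hDeq]
    exact h0
  -- differentiability of the entries of the inverse
  have hadjd : ∀ a b : Fin 4, DifferentiableAt ℝ (fun y => (g y).adjugate a b) x := by
    intro a b
    have hN : ∀ i j : Fin 4, HasPd (fun y => ((g y).updateRow b (Pi.single a 1)) i j) x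
        (if i = b then (fun _ => 0) else fun γ => pd γ (fun y => g y i j) x) := by
      intro i j
      by_cases h : i = b
      · simp only [Matrix.updateRow_apply, h, if_pos rfl, if_true]
        exact HasPd.const _ x
      · simp only [Matrix.updateRow_apply, if_neg h]
        exact hgPd i j
    have := (hasPd_det (fun y => (g y).updateRow b (Pi.single a 1)) hN).diff
    have heq : (fun y => ((g y).updateRow b (Pi.single a 1)).det)
        = (fun y => (g y).adjugate a b) :=
      funext fun y => (Matrix.adjugate_apply (g y) a b).symm
    rwa [heq] at this
  have hginvd : ∀ a b : Fin 4, DifferentiableAt ℝ (fun y => ginv g y a b) x := by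
    intro a b
    have heq : (fun y => ginv g y a b) = fun y => ((g y).det)⁻¹ * (g y).adjugate a b := by
      funext y
      rw [ginv, Matrix.inv_def, Ring.inverse_eq_inv', Matrix.smul_apply, smul_eq_mul]
    rw [heq]
    exact (hdetPd.diff.inv hdetne).mul (hadjd a b)
  have hginvPd0 : ∀ a b : Fin 4, HasPd (fun y => ginv g y a b) x
      (fun γ => pd γ (fun y => ginv g y a b) x) := fun a b =>
    HasPd.of_differentiableAt (hginvd a b)
  -- derivative of the inverse metric
  have hPeq : ∀ a b : Fin 4, (fun γ => pd γ (fun y => ginv g y a b) x)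
      = (fun γ => -(∑ μ, ∑ ν, (g x)⁻¹ a μ * (g x)⁻¹ ν b * pd γ (fun y => g y μ ν) x)) := by
    intro a b
    funext γ
    have hzero : ∀ ν : Fin 4, (∑ μ, (pd γ (fun y => ginv g y a μ) x * g x μ ν
        + ginv g x a μ * pd γ (fun y => g y μ ν) x)) = 0 := by
      intro ν
      have h1 : HasPd (fun y => ∑ μ, ginv g y a μ * g y μ ν) x
          (fun γ => ∑ μ, (pd γ (fun y => ginv g y a μ) x * g x μ ν
            + ginv g x a μ * pd γ (fun y => g y μ ν) x)) :=
        HasPd.sum fun μ => (hginvPd0 a μ).mul (hgPd μ ν)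
      have h2 : HasPd (fun y => ∑ μ, ginv g y a μ * g y μ ν) x (fun _ => 0) := by
        refine (HasPd.const (if a = ν then (1:ℝ) else 0) x).congr_nhds ?_
        refine Filter.eventuallyEq_of_mem hnx fun y hy => ?_
        show ∑ μ, ginv g y a μ * g y μ ν = _
        rw [show (∑ μ, ginv g y a μ * g y μ ν) = ((g y)⁻¹ * g y) a ν from
            (Matrix.mul_apply).symm,
          Matrix.nonsing_inv_mul _ (isUnit_iff_ne_zero.mpr (hg.det_ne y hy)),
          Matrix.one_apply]
      exact congrFun (h1.unique h2) γ
    have hsolve : ∀ ν : Fin 4, (∑ μ, pd γ (fun y => ginv g y a μ) x * g x μ ν)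
        = -(∑ μ, (g x)⁻¹ a μ * pd γ (fun y => g y μ ν) x) := by
      intro ν
      have := hzero ν
      rw [Finset.sum_add_distrib] at this
      have h3 : ∀ μ, ginv g x a μ = (g x)⁻¹ a μ := fun μ => rfl
      simp only [h3] at this
      linarith
    calc pd γ (fun y => ginv g y a b) x
        = ∑ μ, pd γ (fun y => ginv g y a μ) x * (if μ = b then 1 else 0) := by simp
      _ = ∑ μ, pd γ (fun y => ginv g y a μ) x * (∑ ν, g x μ ν * (g x)⁻¹ ν b) := by
          exact Finset.sum_congr rfl fun μ _ => by rw [hGH μ b]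
      _ = ∑ μ, ∑ ν, (pd γ (fun y => ginv g y a μ) x * g x μ ν) * (g x)⁻¹ ν b := by
          refine Finset.sum_congr rfl fun μ _ => ?_
          rw [Finset.mul_sum]
          exact Finset.sum_congr rfl fun ν _ => by ring
      _ = ∑ ν, ∑ μ, (pd γ (fun y => ginv g y a μ) x * g x μ ν) * (g x)⁻¹ ν b :=
          Finset.sum_comm
      _ = ∑ ν, (∑ μ, pd γ (fun y => ginv g y a μ) x * g x μ ν) * (g x)⁻¹ ν b := by
          refine Finset.sum_congr rfl fun ν _ => ?_
          rw [Finset.sum_mul]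
      _ = ∑ ν, (-(∑ μ, (g x)⁻¹ a μ * pd γ (fun y => g y μ ν) x)) * (g x)⁻¹ ν b := by
          exact Finset.sum_congr rfl fun ν _ => by rw [hsolve ν]
      _ = -(∑ ν, ∑ μ, ((g x)⁻¹ a μ * pd γ (fun y => g y μ ν) x) * (g x)⁻¹ ν b) := by
          rw [← Finset.sum_neg_distrib]
          exact Finset.sum_congr rfl fun ν _ => by rw [neg_mul, Finset.sum_mul]
      _ = -(∑ μ, ∑ ν, (g x)⁻¹ a μ * (g x)⁻¹ ν b * pd γ (fun y => g y μ ν) x) := by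
          rw [Finset.sum_comm]
          exact congrArg Neg.neg (Finset.sum_congr rfl fun μ _ =>
            Finset.sum_congr rfl fun ν _ => by ring)
  have hginvPd : ∀ a b : Fin 4, HasPd (fun y => ginv g y a b) x
      (fun γ => -(∑ μ, ∑ ν, (g x)⁻¹ a μ * (g x)⁻¹ ν b * pd γ (fun y => g y μ ν) x)) :=
    fun a b => (hPeq a b) ▸ (hginvPd0 a b)
  -- derivative of √|g|
  have habspos : 0 < adet g x := abs_pos.mpr hdetne
  have hsne : Real.sqrt (adet g x) ≠ 0 := by
    positivity
  have hsqrtPd : HasPd (fun y => Real.sqrt (adet g y)) x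
      (fun γ => 1/2 * Real.sqrt (adet g x) *
        (∑ μ, ∑ ν, (g x)⁻¹ ν μ * pd γ (fun y => g y μ ν) x)) := by
    set s : ℝ := if 0 < (g x).det then 1 else -1 with hs
    have hspos : 0 < s * (g x).det := by
      by_cases h : 0 < (g x).det
      · simp only [hs, if_pos h]; linarith
      · have hlt : (g x).det < 0 := lt_of_le_of_ne (not_lt.mp h) hdetne
        simp only [hs, if_neg h]; nlinarith
    have habs : ∀ y : Pt, 0 < s * (g y).det → adet g y = s * (g y).det := by
      intro y hy
      by_cases h : 0 < (g x).det
      · simp only [hs, if_pos h, one_mul] at hy ⊢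
        exact abs_of_pos hy
      · simp only [hs, if_neg h, neg_one_mul, neg_mul] at hy ⊢
        rw [adet, abs_of_neg (by linarith)]
        ring
    have hcont : ContinuousAt (fun y => s * (g y).det) x :=
      (continuousAt_const.mul hdetPd.diff.continuousAt)
    have hposev : ∀ᶠ y in nhds x, 0 < s * (g y).det :=
      hcont.eventually_mem (lt_mem_nhds hspos)
    have hev : (fun y => Real.sqrt (adet g y)) =ᶠ[nhds x]
        (fun y => Real.sqrt (s * (g y).det)) :=
      hposev.mono fun y hy => by
        show Real.sqrt (adet g y) = Real.sqrt (s * (g y).det)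
        rw [habs y hy]
    have hbase : HasPd (fun y => s * (g y).det) x
        (fun γ => s * ((g x).det * ∑ μ, ∑ ν, (g x)⁻¹ ν μ * pd γ (fun y => g y μ ν) x)) :=
      hdetPd.const_mul s
    have h1 := (hbase.sqrt hspos).congr_nhds hev
    have hD : (fun γ => (s * ((g x).det *
          ∑ μ, ∑ ν, (g x)⁻¹ ν μ * pd γ (fun y => g y μ ν) x)) / (2 * Real.sqrt (s * (g x).det)))
        = (fun γ => 1/2 * Real.sqrt (adet g x) *
          (∑ μ, ∑ ν, (g x)⁻¹ ν μ * pd γ (fun y => g y μ ν) x)) := by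
      funext γ
      have habsx : adet g x = s * (g x).det := habs x hspos
      have hsq : Real.sqrt (s * (g x).det) ^ 2 = s * (g x).det :=
        Real.sq_sqrt hspos.le
      have hune : Real.sqrt (s * (g x).det) ≠ 0 := by
        rw [← habsx]; exact hsne
      rw [habsx]
      generalize (∑ μ, ∑ ν, (g x)⁻¹ ν μ * pd γ (fun y => g y μ ν) x) = S
      field_simp
      linear_combination (-S) * hsq
    rw [← hD]
    exact h1
  -- derivative of √|g| g^{αβ}
  have hprodPd : HasPd (fun y => Real.sqrt (adet g y) * ginv g y α β) x
      (fun γ => (1/2 * Real.sqrt (adet g x) *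
          (∑ μ, ∑ ν, (g x)⁻¹ ν μ * pd γ (fun y => g y μ ν) x)) * ginv g x α β
        + Real.sqrt (adet g x) *
          (-(∑ μ, ∑ ν, (g x)⁻¹ α μ * (g x)⁻¹ ν β * pd γ (fun y => g y μ ν) x))) :=
    hsqrtPd.mul (hginvPd α β)
  -- the X-term of the right-hand side
  have hXappEq : (Real.sqrt (adet g x))⁻¹ *
      Xapp X (fun y => Real.sqrt (adet g y) * ginv g y α β) x
      = ∑ γ : Fin 4, X γ x *
          ((1/2) * (∑ μ, ∑ ν, (g x)⁻¹ ν μ * pd γ (fun y => g y μ ν) x) * (g x)⁻¹ α β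
            + -(∑ μ, ∑ ν, (g x)⁻¹ α μ * (g x)⁻¹ ν β * pd γ (fun y => g y μ ν) x)) := by
    have hfield : ∀ c T P HH : ℝ,
        (Real.sqrt (adet g x))⁻¹ * (c * ((1/2 * Real.sqrt (adet g x) * T) * HH
          + Real.sqrt (adet g x) * -P)) = c * ((1/2) * T * HH + -P) := by
      intro c T P HH
      field_simp
    rw [Xapp, Finset.mul_sum]
    refine Finset.sum_congr rfl fun γ _ => ?_
    rw [hprodPd.pd_eq γ]
    exact hfield _ _ _ _
  -- assemble
  have key := final_algebra (g x) (g x)⁻¹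
    (fun μ ν γ => pd γ (fun y => g y μ ν) x)
    (fun i j => pd i (X j) x) (fun γ => X γ x) hGs hHs hHG hGH α β
  calc hatPi g X x α β
      = (∑ α', ∑ β', (g x)⁻¹ α α' * (g x)⁻¹ β β' *
          ((∑ γ, X γ x * pd γ (fun y => g y α' β') x)
            + (∑ γ, g x γ β' * pd α' (X γ) x) + (∑ γ, g x α' γ * pd β' (X γ) x)))
        - (1/2) * (g x)⁻¹ α β * (∑ γ, ∑ δ, g x γ δ *
            (∑ α', ∑ β', (g x)⁻¹ γ α' * (g x)⁻¹ δ β' *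
              ((∑ ρ, X ρ x * pd ρ (fun y => g y α' β') x)
                + (∑ ρ, g x ρ β' * pd α' (X ρ) x) + (∑ ρ, g x α' ρ * pd β' (X ρ) x)))) := by
        rw [hatPi, piUp]
        rfl
    _ = -(∑ γ : Fin 4, X γ x *
            ((1/2) * (∑ μ, ∑ ν, (g x)⁻¹ ν μ * pd γ (fun y => g y μ ν) x) * (g x)⁻¹ α β
              + -(∑ μ, ∑ ν, (g x)⁻¹ α μ * (g x)⁻¹ ν β * pd γ (fun y => g y μ ν) x)))
          - (g x)⁻¹ α β * (∑ γ : Fin 4, pd γ (X γ) x)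
          + (∑ γ : Fin 4, (g x)⁻¹ α γ * pd γ (X β) x)
          + (∑ γ : Fin 4, (g x)⁻¹ β γ * pd γ (X α) x) := key
    _ = _ := by rw [← hXappEq]; rfl
end
end
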